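/- Let X ⊆ ℤ² be a planar clump and let L = (P₁, …, Pₙ) be a loop in X. Then the interior of L is contained in the realization of X: int(L) ⊆ |X|. -/

import Mathlib

open Metric Set

/-- The closed unit square centered at the lattice point `c`. -/
def cube2 (c : ℤ × ℤ) : Set (EuclideanSpace ℝ (Fin 2)) :=
  {x | |x 0 - (c.1 : ℝ)| ≤ 1 / 2 ∧ |x 1 - (c.2 : ℝ)| ≤ 1 / 2}

/-- The realization of a planar cubical set. -/
def real2 (X : Finset (ℤ × ℤ)) : Set (EuclideanSpace ℝ (Fin 2)) :=
  ⋃ c ∈ X, cube2 c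

/-- `x` is a regular point of the realization of `X`: either an interior point, or the
punctured intersection with every sufficiently small ball is contractible. -/
def RegPt2 (X : Finset (ℤ × ℤ)) (x : EuclideanSpace ℝ (Fin 2)) : Prop :=
  x ∈ interior (real2 X) ∨
    ∃ ε₀ > 0, ∀ ε : ℝ, 0 < ε → ε < ε₀ →
      ContractibleSpace ↥((Metric.ball x ε ∩ real2 X) \ {x})

/-- A planar clump: a nonempty regular cubical set with contractible realization. -/
def IsClump2 (X : Finset (ℤ × ℤ)) : Prop :=
  X.Nonempty ∧ (∀ x ∈ real2 X, RegPt2 X x) ∧ ContractibleSpace ↥(real2 X)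

/-- Two-collapsibility: two distinct cells can each be removed leaving a clump. -/
def TwoCollapsible (X : Finset (ℤ × ℤ)) : Prop :=
  ∃ c ∈ X, ∃ c' ∈ X, c ≠ c' ∧ IsClump2 (X.erase c) ∧ IsClump2 (X.erase c')

/-- The center of a cell, as a point of the Euclidean plane. -/
noncomputable def ctr (c : ℤ × ℤ) : EuclideanSpace ℝ (Fin 2) :=
  (WithLp.equiv 2 (Fin 2 → ℝ)).symm ![(c.1 : ℝ), (c.2 : ℝ)]

/-- Adjacency of cells: `ℓ¹`-distance one. -/
def adjCell (p q : ℤ × ℤ) : Prop := |p.1 - q.1| + |p.2 - q.2| = 1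

/-- The nerve of a (cyclic) loop `P 0, …, P (n-1)`: the union of the closed segments joining
the centers of consecutive cells (cyclically). -/
noncomputable def nerve (n : ℕ) (P : ℕ → ℤ × ℤ) : Set (EuclideanSpace ℝ (Fin 2)) :=
  ⋃ i ∈ Finset.range n, segment ℝ (ctr (P i)) (ctr (P ((i + 1) % n)))

/-- The interior of a loop: the realization of its cells together with all bounded connected
components of the complement of its nerve. -/
noncomputable def loopInterior (n : ℕ) (P : ℕ → ℤ × ℤ) : Set (EuclideanSpace ℝ (Fin 2)) :=
  real2 ((Finset.range n).image P) ∪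
    {x | x ∉ nerve n P ∧ Bornology.IsBounded (connectedComponentIn (nerve n P)ᶜ x)}


open Complex
section Aux
noncomputable section



abbrev E2 := EuclideanSpace ℝ (Fin 2)

/-- Identify the Euclidean plane with ℂ. -/
def toC (z : E2) : ℂ := Complex.mk (z 0) (z 1)

lemma toC_eq (z : E2) : toC z = (z 0 : ℂ) + (z 1 : ℂ) * Complex.I := by
  apply Complex.ext <;> simp [toC]

lemma toC_continuous : Continuous toC := by
  have h : toC = fun z : E2 => (z 0 : ℂ) + (z 1 : ℂ) * Complex.I := funext toC_eq
  rw [h]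
  exact (Complex.continuous_ofReal.comp ((continuous_apply 0).comp (PiLp.continuous_ofLp (p := 2) (β := fun _ : Fin 2 => ℝ)))).add
    ((Complex.continuous_ofReal.comp ((continuous_apply 1).comp (PiLp.continuous_ofLp (p := 2) (β := fun _ : Fin 2 => ℝ)))).mul continuous_const)

lemma toC_sub (z w : E2) : toC (z - w) = toC z - toC w := by
  apply Complex.ext <;> simp [toC]

lemma toC_neg (z : E2) : toC (-z) = -toC z := by
  apply Complex.ext <;> simp [toC]

lemma toC_eq_zero {z : E2} : toC z = 0 ↔ z = 0 := by
  constructor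
  · intro h
    ext i
    fin_cases i
    · simpa [toC, Complex.ext_iff] using congrArg Complex.re h
    · simpa [toC, Complex.ext_iff] using congrArg Complex.im h
  · rintro rfl; apply Complex.ext <;> simp [toC]

/-- The radial map around `y`. -/
def rad (y : E2) (z : E2) : ℂ := toC (z - y) / (‖toC (z - y)‖ : ℂ)

lemma rad_abs {y z : E2} (h : z ≠ y) : ‖rad y z‖ = 1 := by
  have hne : toC (z - y) ≠ 0 := by
    rw [ne_eq, toC_eq_zero, sub_eq_zero]; exact h
  rw [rad, norm_div, Complex.norm_of_nonneg (norm_nonneg _), div_self]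
  simpa using hne

lemma rad_ne_zero {y z : E2} (h : z ≠ y) : rad y z ≠ 0 := by
  intro h0
  have := rad_abs h
  rw [h0] at this
  simp at this

lemma rad_continuousOn (y : E2) : ContinuousOn (rad y) {z | z ≠ y} := by
  intro z hz
  have hne : toC (z - y) ≠ 0 := by
    rw [ne_eq, toC_eq_zero, sub_eq_zero]; exact hz
  have h1 : ContinuousAt (fun z => toC (z - y)) z :=
    (toC_continuous.comp (continuous_id.sub continuous_const)).continuousAt
  exact ((h1.div ((Complex.continuous_ofReal.continuousAt).comp
    ((continuous_norm.continuousAt).comp h1)) (by simpa using hne))).continuousWithinAt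

lemma rad_antipode (y : E2) (w : E2) :
    rad y ((2 : ℝ) • y - w) = - rad y w := by
  have h1 : (2 : ℝ) • y - w - y = -(w - y) := by
    abel_nf
    module
  rw [rad, rad, h1, toC_neg]
  simp [neg_div]




lemma step_lift {A : Type*} [TopologicalSpace A] {F G : A → ℂ}
    (hF : Continuous F) (hG : Continuous G)
    (hFa : ∀ a, ‖F a‖ = 1) (hGa : ∀ a, ‖G a‖ = 1)
    (hclose : ∀ a, ‖G a - F a‖ < 1)
    {θ : A → ℝ} (hθ : Continuous θ) (hlift : ∀ a, Complex.exp (θ a * Complex.I) = F a) :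
    ∃ θ' : A → ℝ, Continuous θ' ∧ ∀ a, Complex.exp (θ' a * Complex.I) = G a := by
  have hFne : ∀ a, F a ≠ 0 := by
    intro a h
    simpa [h] using hFa a
  set q : A → ℂ := fun a => G a / F a with hq
  have hqc : Continuous q := hG.div hF hFne
  have hqa : ∀ a, ‖q a‖ = 1 := by
    intro a; simp [hq, norm_div, hFa, hGa]
  have hq1 : ∀ a, ‖q a - 1‖ < 1 := by
    intro a
    have : q a - 1 = (G a - F a) / F a := by
      rw [hq]; rw [sub_div, div_self (hFne a)]
    rw [this, norm_div, hFa, div_one]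
    exact hclose a
  have hre : ∀ a, 0 < (q a).re := by
    intro a
    have h1 : ((q a).re) ^ 2 + ((q a).im) ^ 2 = 1 := by
      have := hqa a
      have h2 : Complex.normSq (q a) = 1 := by
        rw [← Complex.sq_norm, this]; norm_num
      simpa [Complex.normSq_apply, sq] using h2
    have h2 : ((q a).re - 1) ^ 2 + ((q a).im) ^ 2 < 1 := by
      have := hq1 a
      have h3 : Complex.normSq (q a - 1) < 1 := by
        rw [← Complex.sq_norm]; nlinarith [norm_nonneg (q a - 1)]
      simpa [Complex.normSq_apply, sq] using h3
    nlinarith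
  have hslit : ∀ a, q a ∈ Complex.slitPlane := fun a => Or.inl (hre a)
  refine ⟨fun a => θ a + Complex.arg (q a), ?_, ?_⟩
  · refine hθ.add ?_
    rw [continuous_iff_continuousAt]
    intro a
    exact (Complex.continuousAt_arg (hslit a)).comp hqc.continuousAt
  · intro a
    have hexp : Complex.exp (Complex.arg (q a) * Complex.I) = q a := by
      have := Complex.norm_mul_exp_arg_mul_I (q a)
      rwa [hqa a, Complex.ofReal_one, one_mul] at this
    push_cast
    rw [add_mul, Complex.exp_add, hlift a, hexp]
    show F a * (G a / F a) = G a
    rw [mul_div_assoc', mul_comm, mul_div_assoc, div_self (hFne a), mul_one]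


lemma lift_along {A : Type*} [TopologicalSpace A] [CompactSpace A] {G : A × ℝ → ℂ}
    (hG : Continuous G) (habs : ∀ p, ‖G p‖ = 1)
    {θ₀ : A → ℝ} (hθ₀ : Continuous θ₀) (h0 : ∀ a, Complex.exp (θ₀ a * Complex.I) = G (a, 0)) :
    ∃ θ₁ : A → ℝ, Continuous θ₁ ∧ ∀ a, Complex.exp (θ₁ a * Complex.I) = G (a, 1) := by
  obtain ⟨δ, hδ, hδ1⟩ : ∃ δ > 0, ∀ (a : A) (t s : ℝ), t ∈ Icc (0:ℝ) 1 → s ∈ Icc (0:ℝ) 1 →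
      |t - s| < δ → ‖G (a, t) - G (a, s)‖ < 1 := by
    set T : Set (A × ℝ × ℝ) := {x | x.2.1 ∈ Icc (0:ℝ) 1 ∧ x.2.2 ∈ Icc (0:ℝ) 1 ∧
      1 ≤ ‖G (x.1, x.2.1) - G (x.1, x.2.2)‖} with hT
    have hc1 : Continuous fun x : A × ℝ × ℝ => G (x.1, x.2.1) :=
      hG.comp (continuous_fst.prodMk (continuous_snd.fst))
    have hc2 : Continuous fun x : A × ℝ × ℝ => G (x.1, x.2.2) :=
      hG.comp (continuous_fst.prodMk (continuous_snd.snd))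
    have hTc : IsClosed T := by
      refine IsClosed.inter (isClosed_Icc.preimage continuous_snd.fst) ?_
      refine IsClosed.inter (isClosed_Icc.preimage continuous_snd.snd) ?_
      exact isClosed_le continuous_const (continuous_norm.comp (hc1.sub hc2))
    have hcp : IsCompact ((univ : Set A) ×ˢ (Icc (0:ℝ) 1 ×ˢ Icc (0:ℝ) 1)) :=
      isCompact_univ.prod (isCompact_Icc.prod isCompact_Icc)
    have hTcp : IsCompact T := by
      refine IsCompact.of_isClosed_subset hcp hTc ?_
      rintro ⟨a, t, s⟩ ⟨h1, h2, -⟩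
      exact ⟨mem_univ _, h1, h2⟩
    rcases T.eq_empty_or_nonempty with hTe | hTe
    · refine ⟨1, one_pos, fun a t s ht hs _ => ?_⟩
      by_contra hcon
      have : (a, t, s) ∈ T := ⟨ht, hs, le_of_not_gt hcon⟩
      simp [hTe] at this
    · obtain ⟨x₀, hx₀, hmin⟩ := hTcp.exists_isMinOn hTe
        (Continuous.continuousOn ((continuous_snd.fst.sub continuous_snd.snd).abs))
      refine ⟨|x₀.2.1 - x₀.2.2|, ?_, ?_⟩
      · rcases hx₀ with ⟨-, -, h1⟩
        rw [gt_iff_lt, abs_pos, sub_ne_zero]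
        intro h
        rw [h] at h1
        simp only [sub_self, norm_zero] at h1
        linarith
      · intro a t s ht hs hlt
        by_contra hcon
        exact absurd (hmin (show (a, t, s) ∈ T from ⟨ht, hs, le_of_not_gt hcon⟩))
          (not_le.mpr hlt)
  obtain ⟨n, hn⟩ := exists_nat_one_div_lt hδ
  set N : ℕ := n + 1 with hN
  have hNpos : (0:ℝ) < N := by positivity
  have key : ∀ j : ℕ, j ≤ N → ∃ θ : A → ℝ, Continuous θ ∧
      ∀ a, Complex.exp (θ a * Complex.I) = G (a, (j : ℝ) / N) := by
    intro j
    induction j with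
    | zero => intro _; exact ⟨θ₀, hθ₀, by simpa using h0⟩
    | succ j ih =>
      intro hj
      obtain ⟨θ, hθ, hlift⟩ := ih (Nat.le_of_succ_le hj)
      have hGtc : ∀ t : ℝ, Continuous fun a => G (a, t) := fun t =>
        hG.comp (continuous_id.prodMk continuous_const)
      have hmem : ∀ m : ℕ, m ≤ N → (m : ℝ) / N ∈ Icc (0:ℝ) 1 := by
        intro m hm
        constructor
        · positivity
        · rw [div_le_one hNpos]
          exact_mod_cast hm
      have hclose : ∀ a, ‖G (a, ((j+1 : ℕ) : ℝ) / N) - G (a, (j : ℝ) / N)‖ < 1 := by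
        intro a
        refine hδ1 a _ _ (hmem _ hj) (hmem _ (Nat.le_of_succ_le hj)) ?_
        have heq : ((j+1 : ℕ) : ℝ) / N - (j : ℝ) / N = 1 / N := by
          field_simp
          push_cast; ring
        rw [heq, abs_of_pos (by positivity)]
        have : (1:ℝ) / N = 1 / (n+1) := by rw [hN]; push_cast; ring_nf
        rw [this]
        exact hn
      obtain ⟨θ', hθ', hlift'⟩ := step_lift (F := fun a => G (a, (j : ℝ) / N))
        (G := fun a => G (a, ((j+1 : ℕ) : ℝ) / N)) (hGtc _) (hGtc _)
        (fun a => habs _) (fun a => habs _) hclose hθ hlift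
      exact ⟨θ', hθ', hlift'⟩
  obtain ⟨θ₁, hθ₁, hl⟩ := key N le_rfl
  have hone : ((N : ℝ)) / N = 1 := div_self (ne_of_gt hNpos)
  refine ⟨θ₁, hθ₁, fun a => ?_⟩
  rw [← hone]
  exact hl a

lemma no_lift (y : E2) (R : ℝ) (hR : 0 < R) (θ : ↥(sphere y R) → ℝ)
    (hθ : Continuous θ)
    (hl : ∀ w : ↥(sphere y R), Complex.exp (θ w * Complex.I) = rad y ↑w) : False := by
  have hrank : 1 < Module.rank ℝ E2 := by
    have h2 : Module.finrank ℝ E2 = 2 := finrank_euclideanSpace_fin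
    rw [← Module.finrank_eq_rank, h2]
    exact_mod_cast one_lt_two
  have hconn : IsConnected (sphere y R) := isConnected_sphere hrank y hR.le
  haveI : PreconnectedSpace ↥(sphere y R) := Subtype.preconnectedSpace hconn.isPreconnected
  have hne : Nonempty ↥(sphere y R) := by
    rw [nonempty_subtype]
    exact NormedSpace.sphere_nonempty.mpr hR.le
  obtain ⟨w₀⟩ := hne
  -- points on the sphere differ from y
  have hny : ∀ w : ↥(sphere y R), (w : E2) ≠ y := by
    rintro ⟨w, hw⟩ h
    simp only [mem_sphere_iff_norm] at hw
    simp only at h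
    rw [h] at hw
    simp at hw
    linarith
  -- antipodal map
  have hA : ∀ w : ↥(sphere y R), (2 : ℝ) • y - (w : E2) ∈ sphere y R := by
    rintro ⟨w, hw⟩
    simp only [mem_sphere_iff_norm] at hw ⊢
    have : (2:ℝ) • y - w - y = -(w - y) := by module
    rw [this, norm_neg, ← hw]
  set A : ↥(sphere y R) → ↥(sphere y R) := fun w => ⟨(2 : ℝ) • y - (w : E2), hA w⟩ with hAdef
  have hAc : Continuous A := by
    apply Continuous.subtype_mk
    exact continuous_const.sub continuous_subtype_val
  have hAA : ∀ w, A (A w) = w := by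
    intro w
    apply Subtype.ext
    show (2:ℝ) • y - ((2:ℝ) • y - (w : E2)) = w
    module
  set d : ↥(sphere y R) → ℝ := fun w => θ (A w) - θ w with hd
  have hdc : Continuous d := Continuous.sub (hθ.comp hAc) hθ
  have hdsub : ∀ w, d w = θ (A w) - θ w := fun w => rfl
  have hcosd : ∀ w, Real.cos (d w) = -1 := by
    intro w
    have h1 : Complex.exp ((d w : ℝ) * Complex.I) = -1 := by
      have e1 := hl (A w)
      have e2 := hl w
      have : Complex.exp ((θ (A w) : ℝ) * Complex.I - (θ w : ℝ) * Complex.I) =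
          rad y ↑(A w) / rad y ↑w := by
        rw [Complex.exp_sub, e1, e2]
      rw [show ((d w : ℝ) : ℂ) * Complex.I = (θ (A w) : ℝ) * Complex.I - (θ w : ℝ) * Complex.I
        by push_cast [hd]; ring] at *
      rw [this]
      show rad y ((2:ℝ) • y - (w : E2)) / rad y ↑w = -1
      rw [rad_antipode y w, neg_div, div_self (rad_ne_zero (hny w))]
    have := congrArg Complex.re h1
    rwa [Complex.exp_ofReal_mul_I_re] at this
  -- d takes values in π • odd integers; connectedness forces d constant
  clear_value d
  have hconst : ∀ w w' : ↥(sphere y R), d w = d w' := by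
    intro w w'
    by_contra hne'
    rcases lt_or_gt_of_ne hne' with hlt | hlt
    all_goals {
      -- wlog via symmetry: handle both with a local argument
      have key : ∀ a b : ↥(sphere y R), d a < d b → False := by
        intro a b hab
        have hsin : ∀ t ∈ Icc (d a) (d b), Real.cos t = -1 := by
          intro t ht
          have : t ∈ range d := intermediate_value_univ a b hdc ht
          obtain ⟨w'', rfl⟩ := this
          exact hcosd w''
        -- every point of the interval is an integer multiple of π
        have hmul : ∀ t ∈ Icc (d a) (d b), ∃ n : ℤ, (n : ℝ) * Real.pi = t := by
          intro t ht
          have hc := hsin t ht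
          have : Real.sin t = 0 := by
            nlinarith [Real.sin_sq_add_cos_sq t]
          exact Real.sin_eq_zero_iff.mp this
        obtain ⟨n₁, hn₁⟩ := hmul (d a) ⟨le_refl _, hab.le⟩
        set t := d a + min Real.pi (d b - d a) / 2 with htdef
        have hπ : 0 < Real.pi := Real.pi_pos
        have ht : t ∈ Icc (d a) (d b) := by
          constructor
          · rw [htdef]
            have : 0 < min Real.pi (d b - d a) := lt_min hπ (by linarith)
            linarith
          · rw [htdef]
            have h1 : min Real.pi (d b - d a) ≤ d b - d a := min_le_right _ _
            have : 0 < min Real.pi (d b - d a) := lt_min hπ (by linarith)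
            linarith
        obtain ⟨m, hm⟩ := hmul t ht
        have hd1 : 0 < t - d a := by
          rw [htdef]
          have : 0 < min Real.pi (d b - d a) := lt_min hπ (by linarith)
          linarith
        have hd2 : t - d a < Real.pi := by
          rw [htdef]
          have : min Real.pi (d b - d a) ≤ Real.pi := min_le_left _ _
          linarith
        have hdiff : ((m - n₁ : ℤ) : ℝ) * Real.pi = t - d a := by
          push_cast
          rw [sub_mul, hm, hn₁]
        have h0 : (0 : ℤ) < m - n₁ := by
          by_contra hcon
          push_neg at hcon
          have : ((m - n₁ : ℤ) : ℝ) * Real.pi ≤ 0 := by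
            apply mul_nonpos_of_nonpos_of_nonneg _ hπ.le
            exact_mod_cast hcon
          linarith
        have h1' : (1 : ℤ) ≤ m - n₁ := h0
        have : Real.pi ≤ t - d a := by
          rw [← hdiff]
          nlinarith [(by exact_mod_cast h1' : (1:ℝ) ≤ ((m - n₁ : ℤ) : ℝ))]
        linarith
      exact key _ _ (by assumption)
    }
  -- conclude
  have h1 : d (A w₀) = - d w₀ := by
    rw [hdsub, hdsub, hAA]
    ring
  have h2 := hconst (A w₀) w₀
  have h3 : d w₀ = 0 := by linarith [h1, h2]
  have := hcosd w₀
  rw [h3, Real.cos_zero] at this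
  linarith


/-- On a compact contractible subset avoiding `y`, the radial map admits a continuous lift. -/
lemma lift_on_contractible (K : Set E2) (hKc : IsCompact K) (hctr : ContractibleSpace ↥K)
    (y : E2) (hy : y ∉ K) :
    ∃ θ : ↥K → ℝ, Continuous θ ∧ ∀ z : ↥K, Complex.exp (θ z * Complex.I) = rad y ↑z := by
  haveI : CompactSpace ↥K := isCompact_iff_compactSpace.mp hKc
  obtain ⟨x₀, ⟨H⟩⟩ := id_nullhomotopic ↥K
  -- symm: from const to id
  let H' := H.symm
  have hne : ∀ z : ↥K, (z : E2) ≠ y := fun z h => hy (h ▸ z.2)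
  set G : ↥K × ℝ → ℂ := fun p =>
    rad y ↑(H' (Set.projIcc (0:ℝ) 1 zero_le_one p.2, p.1)) with hG
  have hGin : ∀ p : ↥K × ℝ, ((H' (Set.projIcc (0:ℝ) 1 zero_le_one p.2, p.1) : E2)) ≠ y :=
    fun p => hne _
  have hGc : Continuous G := by
    apply (rad_continuousOn y).comp_continuous
    · exact continuous_subtype_val.comp (H'.continuous.comp
        (((continuous_projIcc).comp continuous_snd).prodMk continuous_fst))
    · exact hGin
  have hGabs : ∀ p, ‖G p‖ = 1 := fun p => rad_abs (hGin p)
  have h0 : ∀ a : ↥K, G (a, 0) = rad y ↑x₀ := by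
    intro a
    show rad y ↑(H' (Set.projIcc (0:ℝ) 1 zero_le_one 0, a)) = rad y ↑x₀
    have h1 : H' (Set.projIcc (0:ℝ) 1 zero_le_one 0, a) = x₀ := by
      rw [Set.projIcc_left]
      simpa using H'.apply_zero a
    rw [h1]
  have habs0 : ‖rad y ↑x₀‖ = 1 := rad_abs (hne x₀)
  have hlift0 : Complex.exp ((Complex.arg (rad y ↑x₀) : ℝ) * Complex.I) = rad y ↑x₀ := by
    have := Complex.norm_mul_exp_arg_mul_I (rad y ↑x₀)
    rwa [habs0, Complex.ofReal_one, one_mul] at this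
  obtain ⟨θ, hθ, hl⟩ := lift_along (A := ↥K) hGc hGabs
    (θ₀ := fun _ => Complex.arg (rad y ↑x₀)) continuous_const
    (fun a => by rw [h0 a]; exact hlift0)
  refine ⟨θ, hθ, fun z => ?_⟩
  rw [hl z]
  show rad y ↑(H' (Set.projIcc (0:ℝ) 1 zero_le_one 1, z)) = rad y ↑z
  have h1 : H' (Set.projIcc (0:ℝ) 1 zero_le_one 1, z) = z := by
    rw [Set.projIcc_right]
    simpa using H'.apply_one z
  rw [h1]

/-- Complement components of a compact contractible planar set are unbounded. -/
lemma unbounded_component (K : Set E2) (hKc : IsCompact K) (hctr : ContractibleSpace ↥K)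
    (y : E2) (hy : y ∉ K) : ¬ Bornology.IsBounded (connectedComponentIn Kᶜ y) := by
  intro hb
  set V := connectedComponentIn Kᶜ y with hV
  have hyV : y ∈ V := mem_connectedComponentIn hy
  have hVopen : IsOpen V := hKc.isClosed.isOpen_compl.connectedComponentIn
  have hfr : ∀ z ∈ frontier V, z ∈ K := by
    intro z hz
    by_contra hzK
    obtain ⟨r, hr, hball⟩ := Metric.isOpen_iff.mp hKc.isClosed.isOpen_compl z hzK
    obtain ⟨v, hv1, hv2⟩ := Metric.mem_closure_iff.mp hz.1 r hr
    have hvV : v ∈ V := hv1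
    have hzV : z ∈ connectedComponentIn Kᶜ v := by
      refine (convex_ball z r).isPreconnected.subset_connectedComponentIn ?_ hball ?_
      · exact Metric.mem_ball.mpr (by rw [dist_comm]; exact hv2)
      · exact mem_ball_self hr
    have hvV' : v ∈ connectedComponentIn Kᶜ y := hvV
    have he := connectedComponentIn_eq hvV'
    rw [← he] at hzV
    have hzV' : z ∈ V := hzV
    exact hz.2 (by rwa [hVopen.interior_eq] : z ∈ interior V)
  -- lift of the radial map on K
  obtain ⟨θK, hθKc, hθKl⟩ := lift_on_contractible K hKc hctr y hy
  -- Tietze extension of the lift restricted to the frontier of V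
  have hScl : IsClosed (frontier V) := isClosed_frontier
  set θS : C(↥(frontier V), ℝ) :=
    ⟨fun z => θK ⟨(z : E2), hfr _ z.2⟩, by
      apply hθKc.comp
      exact Continuous.subtype_mk continuous_subtype_val _⟩ with hθS
  obtain ⟨Θ, hΘ⟩ := θS.exists_restrict_eq hScl
  have hΘeq : ∀ (z : E2) (hz : z ∈ frontier V), Θ z = θK ⟨z, hfr _ hz⟩ := by
    intro z hz
    have := ContinuousMap.congr_fun hΘ ⟨z, hz⟩
    simpa [hθS] using this
  -- the glued map
  classical
  set g : E2 → ℂ := fun z => if z ∈ V then Complex.exp ((Θ z : ℝ) * Complex.I) else rad y z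
    with hg
  have hyne : ∀ z : E2, z ∉ V → z ≠ y := fun z hz h => hz (h ▸ hyV)
  have hfrag : ∀ a ∈ frontier V, Complex.exp ((Θ a : ℝ) * Complex.I) = rad y a := by
    intro a ha
    have haK : a ∈ K := hfr _ ha
    rw [hΘeq a ha]
    exact hθKl ⟨a, haK⟩
  have hgc : Continuous g := by
    rw [hg]
    apply continuous_if
    · intro a ha
      have : frontier {x | x ∈ V} = frontier V := rfl
      rw [this] at ha
      exact hfrag a ha
    · exact ((Complex.continuous_ofReal.comp Θ.continuous).mul continuous_const).cexp.continuousOn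
    · have hcl : closure {x | ¬ x ∈ V} = Vᶜ := by
        have h1 : {x | ¬ x ∈ V} = Vᶜ := rfl
        rw [h1, hVopen.isClosed_compl.closure_eq]
      rw [hcl]
      exact (rad_continuousOn y).mono (fun z hz => hyne z hz)
  -- the values of g have modulus one
  have habsg : ∀ z : E2, ‖g z‖ = 1 := by
    intro z
    by_cases hzV : z ∈ V
    · show ‖if z ∈ V then Complex.exp ((Θ z : ℝ) * Complex.I) else rad y z‖ = 1
      rw [if_pos hzV]
      exact Complex.norm_exp_ofReal_mul_I _
    · show ‖if z ∈ V then Complex.exp ((Θ z : ℝ) * Complex.I) else rad y z‖ = 1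
      rw [if_neg hzV]
      exact rad_abs (hyne z hzV)
  -- choose a radius containing K and V
  obtain ⟨R, hR0, hsub⟩ := (hKc.isBounded.union hb).subset_ball_lt 0 y
  haveI : CompactSpace ↥(sphere y R) := isCompact_iff_compactSpace.mp (isCompact_sphere y R)
  set Gh : ↥(sphere y R) × ℝ → ℂ := fun p => g (y + p.2 • ((p.1 : E2) - y)) with hGh
  have hGhc : Continuous Gh := by
    apply hgc.comp
    exact continuous_const.add (continuous_snd.smul
      ((continuous_subtype_val.comp continuous_fst).sub continuous_const))
  have hGhabs : ∀ p, ‖Gh p‖ = 1 := fun p => habsg _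
  have hgy : g y = Complex.exp ((Θ y : ℝ) * Complex.I) := by
    show (if y ∈ V then Complex.exp ((Θ y : ℝ) * Complex.I) else rad y y) = _
    rw [if_pos hyV]
  have hGh0 : ∀ a : ↥(sphere y R), Complex.exp ((Θ y : ℝ) * Complex.I) = Gh (a, 0) := by
    intro a
    show _ = g (y + (0:ℝ) • ((a : E2) - y))
    rw [zero_smul, add_zero, hgy]
  obtain ⟨θ₁, hθ₁c, hθ₁l⟩ := lift_along (A := ↥(sphere y R)) hGhc hGhabs
    (θ₀ := fun _ => Θ y) continuous_const hGh0
  refine no_lift y R hR0 θ₁ hθ₁c ?_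
  intro w
  rw [hθ₁l w]
  show g (y + (1:ℝ) • ((w : E2) - y)) = rad y ↑w
  rw [one_smul]
  have hw1 : y + ((w : E2) - y) = (w : E2) := by abel
  rw [hw1]
  have hwV : (w : E2) ∉ V := by
    intro hwV
    have : (w : E2) ∈ ball y R := hsub (Or.inr hwV)
    rw [mem_ball] at this
    have hws : (w : E2) ∈ sphere y R := w.2
    rw [mem_sphere] at hws
    rw [hws] at this
    exact lt_irrefl _ this
  show (if (w : E2) ∈ V then Complex.exp ((Θ (w:E2) : ℝ) * Complex.I) else rad y ↑w) = rad y ↑w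
  rw [if_neg hwV]


lemma ctr_apply0 (c : ℤ × ℤ) : ctr c 0 = (c.1 : ℝ) := rfl
lemma ctr_apply1 (c : ℤ × ℤ) : ctr c 1 = (c.2 : ℝ) := rfl

lemma cube2_isCompact (c : ℤ × ℤ) : IsCompact (cube2 c) := by
  have hcl : IsClosed (cube2 c) := by
    apply IsClosed.inter
    · exact isClosed_le ((((continuous_apply 0).comp (PiLp.continuous_ofLp (p := 2) (β := fun _ : Fin 2 => ℝ))).sub continuous_const).abs) continuous_const
    · exact isClosed_le ((((continuous_apply 1).comp (PiLp.continuous_ofLp (p := 2) (β := fun _ : Fin 2 => ℝ))).sub continuous_const).abs) continuous_const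
  refine IsCompact.of_isClosed_subset (isCompact_closedBall (ctr c) 2) hcl ?_
  intro x hx
  obtain ⟨h1, h2⟩ := hx
  rw [mem_closedBall, EuclideanSpace.dist_eq]
  have e0 : dist (x 0) (ctr c 0) = |x 0 - (c.1:ℝ)| := by rw [Real.dist_eq, ctr_apply0]
  have e1 : dist (x 1) (ctr c 1) = |x 1 - (c.2:ℝ)| := by rw [Real.dist_eq, ctr_apply1]
  rw [Fin.sum_univ_two, e0, e1]
  calc Real.sqrt (|x 0 - (c.1:ℝ)| ^ 2 + |x 1 - (c.2:ℝ)| ^ 2) ≤ Real.sqrt 4 := by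
        apply Real.sqrt_le_sqrt
        nlinarith [abs_nonneg (x 0 - (c.1:ℝ)), abs_nonneg (x 1 - (c.2:ℝ))]
    _ = 2 := by
        rw [show (4:ℝ) = 2^2 by norm_num, Real.sqrt_sq (by norm_num : (0:ℝ) ≤ 2)]

lemma real2_isCompact (X : Finset (ℤ × ℤ)) : IsCompact (real2 X) := by
  rw [real2]
  exact X.finite_toSet.isCompact_biUnion (fun c _ => cube2_isCompact c)

lemma real2_mono {X Y : Finset (ℤ × ℤ)} (h : X ⊆ Y) : real2 X ⊆ real2 Y := by
  apply Set.biUnion_subset_biUnion_left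
  exact_mod_cast h

lemma segment_subset_cubes {p q : ℤ × ℤ} (h : adjCell p q) :
    segment ℝ (ctr p) (ctr q) ⊆ cube2 p ∪ cube2 q := by
  rintro x ⟨u, v, hu, hv, huv, rfl⟩
  have hx0 : (u • ctr p + v • ctr q) 0 = u * (p.1 : ℝ) + v * (q.1 : ℝ) := rfl
  have hx1 : (u • ctr p + v • ctr q) 1 = u * (p.2 : ℝ) + v * (q.2 : ℝ) := rfl
  rw [adjCell] at h
  have hcases : (|p.1 - q.1| = 1 ∧ p.2 = q.2) ∨ (p.1 = q.1 ∧ |p.2 - q.2| = 1) := by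
    have ha := abs_nonneg (p.1 - q.1)
    have hb := abs_nonneg (p.2 - q.2)
    rcases (by omega : (|p.1 - q.1| = 1 ∧ |p.2 - q.2| = 0) ∨
        (|p.1 - q.1| = 0 ∧ |p.2 - q.2| = 1)) with ⟨u1, u2⟩ | ⟨u1, u2⟩
    · left
      exact ⟨u1, by have := abs_eq_zero.mp u2; omega⟩
    · right
      exact ⟨by have := abs_eq_zero.mp u1; omega, u2⟩
  have habs : ∀ a b : ℤ, |a - b| = 1 → |(a : ℝ) - (b : ℝ)| = 1 := by
    intro a b hab
    have : ((|a - b| : ℤ) : ℝ) = 1 := by exact_mod_cast hab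
    rwa [Int.cast_abs, Int.cast_sub] at this
  rcases hcases with ⟨h1, h2⟩ | ⟨h1, h2⟩
  · have h1' := habs _ _ h1
    rcases le_or_gt v (1/2) with hv2 | hv2
    · left
      constructor
      · rw [hx0]
        have : u * (p.1:ℝ) + v * (q.1:ℝ) - (p.1:ℝ) = v * ((q.1:ℝ) - (p.1:ℝ)) := by
          have hu1 : u = 1 - v := by linarith
          rw [hu1]; ring
        rw [this, abs_mul, abs_sub_comm, h1', mul_one, _root_.abs_of_nonneg hv]
        linarith
      · rw [hx1]
        have : u * (p.2:ℝ) + v * (q.2:ℝ) - (p.2:ℝ) = 0 := by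
          rw [h2]
          have hu1 : u = 1 - v := by linarith
          rw [hu1]; push_cast; ring
        rw [this]
        norm_num
    · right
      constructor
      · rw [hx0]
        have : u * (p.1:ℝ) + v * (q.1:ℝ) - (q.1:ℝ) = u * ((p.1:ℝ) - (q.1:ℝ)) := by
          have hv1 : v = 1 - u := by linarith
          rw [hv1]; ring
        rw [this, abs_mul, h1', mul_one, _root_.abs_of_nonneg hu]
        linarith
      · rw [hx1]
        have : u * (p.2:ℝ) + v * (q.2:ℝ) - (q.2:ℝ) = 0 := by
          rw [h2]
          have hv1 : v = 1 - u := by linarith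
          rw [hv1]; push_cast; ring
        rw [this]
        norm_num
  · have h2' := habs _ _ h2
    rcases le_or_gt v (1/2) with hv2 | hv2
    · left
      constructor
      · rw [hx0]
        have : u * (p.1:ℝ) + v * (q.1:ℝ) - (p.1:ℝ) = 0 := by
          rw [h1]
          have hu1 : u = 1 - v := by linarith
          rw [hu1]; push_cast; ring
        rw [this]
        norm_num
      · rw [hx1]
        have : u * (p.2:ℝ) + v * (q.2:ℝ) - (p.2:ℝ) = v * ((q.2:ℝ) - (p.2:ℝ)) := by
          have hu1 : u = 1 - v := by linarith
          rw [hu1]; ring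
        rw [this, abs_mul, abs_sub_comm, h2', mul_one, _root_.abs_of_nonneg hv]
        linarith
    · right
      constructor
      · rw [hx0]
        have : u * (p.1:ℝ) + v * (q.1:ℝ) - (q.1:ℝ) = 0 := by
          rw [h1]
          have hv1 : v = 1 - u := by linarith
          rw [hv1]; push_cast; ring
        rw [this]
        norm_num
      · rw [hx1]
        have : u * (p.2:ℝ) + v * (q.2:ℝ) - (q.2:ℝ) = u * ((p.2:ℝ) - (q.2:ℝ)) := by
          have hv1 : v = 1 - u := by linarith
          rw [hv1]; ring
        rw [this, abs_mul, h2', mul_one, _root_.abs_of_nonneg hu]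
        linarith

lemma nerve_subset (X : Finset (ℤ × ℤ)) (n : ℕ) (P : ℕ → ℤ × ℤ)
    (hmem : ∀ i < n, P i ∈ X) (hadj : ∀ i < n, adjCell (P i) (P ((i + 1) % n)))
    (hn : 0 < n) :
    nerve n P ⊆ real2 X := by
  rw [nerve]
  apply Set.iUnion₂_subset
  intro i hi
  rw [Finset.mem_range] at hi
  refine (segment_subset_cubes (hadj i hi)).trans ?_
  have hmem1 : P i ∈ X := hmem i hi
  have hmem2 : P ((i + 1) % n) ∈ X := hmem _ (Nat.mod_lt _ hn)
  apply Set.union_subset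
  · exact Set.subset_biUnion_of_mem (u := fun c => cube2 c) hmem1
  · exact Set.subset_biUnion_of_mem (u := fun c => cube2 c) hmem2


end
end Aux

/-- The interior of a loop in a planar clump is contained in the realization
of the clump. -/
theorem loopInterior_subset_realization (X : Finset (ℤ × ℤ)) (hX : IsClump2 X)
    (n : ℕ) (hn : 3 ≤ n) (P : ℕ → ℤ × ℤ)
    (hinj : ∀ i < n, ∀ j < n, P i = P j → i = j)
    (hmem : ∀ i < n, P i ∈ X)
    (hadj : ∀ i < n, adjCell (P i) (P ((i + 1) % n))) :
    loopInterior n P ⊆ real2 X := by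
  intro x hx
  rcases hx with hx | ⟨hx1, hx2⟩
  · refine real2_mono ?_ hx
    intro c hc
    rw [Finset.mem_image] at hc
    obtain ⟨i, hi, rfl⟩ := hc
    exact hmem i (Finset.mem_range.mp hi)
  · by_contra hxK
    have hn0 : 0 < n := by omega
    have hnerve := nerve_subset X n P hmem hadj hn0
    have hsub : (real2 X)ᶜ ⊆ (nerve n P)ᶜ := Set.compl_subset_compl.mpr hnerve
    have hmono := connectedComponentIn_mono x hsub
    have hbdd : Bornology.IsBounded (connectedComponentIn (real2 X)ᶜ x) := hx2.subset hmono
    exact unbounded_component (real2 X) (real2_isCompact X) hX.2.2 x hxK hbdd
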